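/- Fix ρ := 1 and let ω ∈ ℝ be arbitrary. Set h₀ := 2/3 and c₀ := −2ω/9. Then for every ε ∈ ℝ one has P(2/3 + ε, 2/3 − ε, c₀ + ωε/3) = 0 and S(2/3 + ε, 2/3 − ε, c₀ + ωε/3) = 0. In particular, for each ε the triple (h, h₊, c) = (2/3 + ε, 2/3 − ε, −2ω/9 + ωε/3) is an exact solution of the conjugate flow equations for homogeneous-density flow. -/
import Mathlib


open Real Set

/-- The first conjugate-flow polynomial `P(h, h₊, c)` (with parameters ρ, ω). -/
noncomputable def Pfun (ρ ω h hp c : ℝ) : ℝ :=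
  ω ^ 2 * hp ^ 2 * (hp - h) * (2 - hp - h) ^ 2 * ρ
    + 4 * hp ^ 2 * (2 * hp ^ 2 - c ^ 2 * hp - 4 * hp - c ^ 2 * h + 2 * c ^ 2 + 2) * ρ
    + 4 * c * ω * (1 - h) * hp ^ 2 * (2 - hp - h) * ρ
    - 4 * (1 - hp) ^ 2 * (2 * hp ^ 2 - c ^ 2 * hp - c ^ 2 * h)

/-- The flow-force conjugate-flow polynomial `S(h, h₊, c)` (with parameters ρ, ω). -/
noncomputable def Sfun (ρ ω h hp c : ℝ) : ℝ :=
  ω ^ 2 * hp * (hp - h) * (hp + 3 * h - 4) * ρ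
    + 12 * hp * (hp - c ^ 2 - 1) * ρ
    + 12 * c * ω * (h - 1) * hp * ρ
    - 12 * (hp - 1) * (hp - c ^ 2)

/-- For homogeneous density (ρ = 1) and arbitrary constant vorticity ω, the triple
(2/3 + ε, 2/3 − ε, −2ω/9 + ωε/3) is an exact solution of the conjugate flow
equations for every ε. -/
theorem homogeneous_conjugate_flows_exact (ω : ℝ) :
    ∀ ε : ℝ,
      Pfun 1 ω (2 / 3 + ε) (2 / 3 - ε) (-2 * ω / 9 + ω * ε / 3) = 0 ∧
      Sfun 1 ω (2 / 3 + ε) (2 / 3 - ε) (-2 * ω / 9 + ω * ε / 3) = 0 := by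
  intro ε
  constructor <;> simp only [Pfun, Sfun] <;> ring
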